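/- Let (X_i) be i.i.d. random variables with X_1 > c almost surely for some c > 0 and finite mean. Then E[1/(X_1 + ··· + X_n)] = (1 + o(1)) · 1/(n·E[X_1]) as n → ∞. -/

import Mathlib

open MeasureTheory ProbabilityTheory Filter Topology

/-- For i.i.d. random variables `X_i` with `X_1 > c > 0` a.s. and finite mean,
`E[1/(X_1 + ⋯ + X_n)] = (1 + o(1)) / (n E[X_1])`, i.e.
`n E[X_1] · E[1/(X_1 + ⋯ + X_n)] → 1`. -/
theorem inverse_sum_expectation {Ω : Type*} [MeasurableSpace Ω] (μ : Measure Ω)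
    [IsProbabilityMeasure μ] (X : ℕ → Ω → ℝ) (hmeas : ∀ i, Measurable (X i))
    (hindep : iIndepFun X μ)
    (hident : ∀ i, Measure.map (X i) μ = Measure.map (X 0) μ)
    (c : ℝ) (hc : 0 < c) (hbound : ∀ i, ∀ᵐ ω ∂μ, c < X i ω)
    (hint : Integrable (X 0) μ) :
    Tendsto (fun n : ℕ =>
        ((n : ℝ) * ∫ ω, X 0 ω ∂μ) * ∫ ω, (∑ i ∈ Finset.range n, X i ω)⁻¹ ∂μ)
      atTop (nhds 1) := by
  set m : ℝ := ∫ ω, X 0 ω ∂μ with hm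
  have hcle : c ≤ m := by
    have : (∫ _ω, c ∂μ) ≤ m :=
      integral_mono_ae (integrable_const c) hint ((hbound 0).mono fun ω h => h.le)
    simpa using this
  have hmpos : 0 < m := lt_of_lt_of_le hc hcle
  -- SLLN
  have hident' : ∀ i, IdentDistrib (X i) (X 0) μ μ := fun i =>
    ⟨(hmeas i).aemeasurable, (hmeas 0).aemeasurable, hident i⟩
  have hpair : Pairwise (Function.onFun (IndepFun · · μ) X) := fun i j hij => hindep.indepFun hij
  have hslln := strong_law_ae_real X hint hpair hident'
  have hball : ∀ᵐ ω ∂μ, ∀ i, c < X i ω := ae_all_iff.2 hbound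
  -- functions f n ω = n * (S_n ω)⁻¹
  set f : ℕ → Ω → ℝ := fun n ω => (n : ℝ) * (∑ i ∈ Finset.range n, X i ω)⁻¹ with hf
  have hSmeas : ∀ n, Measurable fun ω => ∑ i ∈ Finset.range n, X i ω := fun n =>
    Finset.measurable_sum _ fun i _ => hmeas i
  have hSlb : ∀ (n : ℕ) (ω : Ω), (∀ i, c < X i ω) → (n : ℝ) * c ≤ ∑ i ∈ Finset.range n, X i ω := by
    intro n ω hω
    calc (n : ℝ) * c = ∑ _i ∈ Finset.range n, c := by
          simp [mul_comm]
      _ ≤ ∑ i ∈ Finset.range n, X i ω :=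
          Finset.sum_le_sum fun i _ => (hω i).le
  have hDCT : Tendsto (fun n => ∫ ω, f n ω ∂μ) atTop (𝓝 m⁻¹) := by
    rw [show (m⁻¹ : ℝ) = ∫ _ω, m⁻¹ ∂μ by simp]
    apply tendsto_integral_of_dominated_convergence (fun _ => c⁻¹)
    · exact fun n => (measurable_const.mul ((hSmeas n).inv)).aestronglyMeasurable
    · exact integrable_const _
    · intro n
      filter_upwards [hball] with ω hω
      rcases Nat.eq_zero_or_pos n with hn | hn
      · subst hn; simp [f, inv_nonneg.2 hc.le]
      · have hnc : 0 < (n : ℝ) * c := by positivity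
        have hS := hSlb n ω hω
        have hSpos : 0 < ∑ i ∈ Finset.range n, X i ω := lt_of_lt_of_le hnc hS
        have h1 : (∑ i ∈ Finset.range n, X i ω)⁻¹ ≤ ((n : ℝ) * c)⁻¹ :=
          inv_anti₀ hnc hS
        have h2 : f n ω ≤ c⁻¹ := by
          have := mul_le_mul_of_nonneg_left h1 (Nat.cast_nonneg n : (0:ℝ) ≤ n)
          have hne : (n : ℝ) ≠ 0 := Nat.cast_ne_zero.2 hn.ne'
          calc f n ω ≤ (n : ℝ) * ((n : ℝ) * c)⁻¹ := this
            _ = c⁻¹ := by field_simp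
        have h3 : 0 ≤ f n ω := by positivity
        rw [Real.norm_eq_abs, abs_of_nonneg h3]
        exact h2
    · filter_upwards [hball, hslln] with ω hω hlim
      have : Tendsto (fun n : ℕ => ((∑ i ∈ Finset.range n, X i ω) / n)⁻¹) atTop
          (𝓝 m⁻¹) := hlim.inv₀ hmpos.ne'
      convert this using 2 with n
      rw [inv_div, div_eq_mul_inv]
  have key : Tendsto (fun n => m * ∫ ω, f n ω ∂μ) atTop (𝓝 (m * m⁻¹)) :=
    tendsto_const_nhds.mul hDCT
  rw [mul_inv_cancel₀ hmpos.ne'] at key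
  convert key using 2 with n
  rw [integral_const_mul]
  ring
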